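/- Let f be a nonzero polynomial in n ≥ 1 variables of total degree at most d over a finite field F with q elements, with d < q. Then f has at least (q-d)·q^(n-1) non-roots, i.e., points of F^n where f does not vanish; in particular f has a non-root. -/

import Mathlib

open scoped Classical

open Finset MvPolynomial

/-- Univariate: a nonzero polynomial has at least `q - deg` non-roots. -/
lemma univ_nonroots {F : Type*} [Field F] [Fintype F] [DecidableEq F]
    (p : Polynomial F) (hp : p ≠ 0) :
    Fintype.card F - p.natDegree ≤ (univ.filter fun a : F => p.eval a ≠ 0).card := by
  have hsub : (univ.filter fun a : F => p.eval a = 0) ⊆ p.roots.toFinset := by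
    intro a ha
    simp only [Finset.mem_filter] at ha
    simp [Multiset.mem_toFinset, Polynomial.mem_roots, hp, ha.2]
  have h1 : (univ.filter fun a : F => p.eval a = 0).card ≤ p.natDegree :=
    le_trans (Finset.card_le_card hsub)
      (le_trans (Multiset.toFinset_card_le _) (Polynomial.card_roots' p))
  have h2 : (univ.filter fun a : F => p.eval a = 0).card
      + (univ.filter fun a : F => ¬ p.eval a = 0).card = Fintype.card F := by
    rw [Finset.card_filter_add_card_filter_not, Finset.card_univ]
  simp only [ne_eq]
  omega

/-- Key induction: Schwartz–Zippel style counting bound (multiplied by `q` so that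
the statement also holds for `n = 0`). -/
lemma key_bound {F : Type*} [Field F] [Fintype F] [DecidableEq F] :
    ∀ (n : ℕ) (f : MvPolynomial (Fin n) F), f ≠ 0 → ∀ d : ℕ, f.totalDegree ≤ d →
      d < Fintype.card F →
      (Fintype.card F - d) * (Fintype.card F) ^ n
        ≤ (univ.filter fun x : Fin n → F => MvPolynomial.eval x f ≠ 0).card * Fintype.card F := by
  intro n
  induction n with
  | zero =>
    intro f hf d _ _
    have hc : f.coeff 0 ≠ 0 := by
      intro h
      apply hf
      rw [f.eq_C_of_isEmpty, h, map_zero]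
    have hfilter : (univ.filter fun x : Fin 0 → F => MvPolynomial.eval x f ≠ 0) = univ := by
      apply Finset.filter_true_of_mem
      intro x _
      rw [f.eq_C_of_isEmpty]
      simpa using hc
    rw [hfilter]
    simp only [Finset.card_univ, pow_zero, mul_one]
    have : Fintype.card (Fin 0 → F) = 1 := by simp
    rw [this, one_mul]
    exact Nat.sub_le _ _
  | succ n ih =>
    intro f hf d hdeg hd
    set q := Fintype.card F with hq
    set p := finSuccEquiv F n f with hpdef
    have hp : p ≠ 0 := by
      simp only [hpdef, ne_eq, EmbeddingLike.map_eq_zero_iff]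
      exact hf
    set k := p.natDegree with hk
    set g := p.leadingCoeff with hgdef
    have hg : g ≠ 0 := Polynomial.leadingCoeff_ne_zero.mpr hp
    have hkd : k ≤ d := by
      rw [hk, hpdef, natDegree_finSuccEquiv]
      exact le_trans (degreeOf_le_totalDegree f 0) hdeg
    have hgk : g.totalDegree + k ≤ d := by
      have := totalDegree_coeff_finSuccEquiv_add_le f k
        (by rw [← Polynomial.leadingCoeff]; exact hg)
      exact le_trans this hdeg
    have hgd : g.totalDegree ≤ d - k := by omega
    have hdk : d - k < q := by omega
    -- inductive bound for g
    have hG := ih g hg (d - k) hgd hdk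
    set G := (univ.filter fun s : Fin n → F => MvPolynomial.eval s g ≠ 0) with hGdef
    -- for each nonroot s of g, the univariate specialization has ≥ q - k nonroots
    have huni : ∀ s ∈ G, q - k ≤
        (univ.filter fun y : F => MvPolynomial.eval (Fin.cons y s) f ≠ 0).card := by
      intro s hs
      rw [hGdef, Finset.mem_filter] at hs
      set ps := p.map (MvPolynomial.eval s) with hpsdef
      have hcoeff : ps.coeff k ≠ 0 := by
        rw [hpsdef, Polynomial.coeff_map]
        exact hs.2
      have hps : ps ≠ 0 := fun h => hcoeff (by rw [h, Polynomial.coeff_zero])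
      have hdle : ps.natDegree ≤ k := Polynomial.natDegree_map_le
      have := univ_nonroots ps hps
      have hfilter_eq : (univ.filter fun y : F => ps.eval y ≠ 0)
          = (univ.filter fun y : F => MvPolynomial.eval (Fin.cons y s) f ≠ 0) := by
        apply Finset.filter_congr
        intro y _
        rw [eval_eq_eval_mv_eval']
      rw [hfilter_eq] at this
      omega
    -- counting: nonroots of f decompose as a sum over s
    have hcount : (univ.filter fun x : Fin (n + 1) → F => MvPolynomial.eval x f ≠ 0).card
        = ∑ s : Fin n → F,
            (univ.filter fun y : F => MvPolynomial.eval (Fin.cons y s) f ≠ 0).card := by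
      rw [Finset.card_filter]
      have := Fintype.sum_equiv (Fin.consEquiv fun _ : Fin (n + 1) => F).symm
        (fun x : Fin (n + 1) → F => if MvPolynomial.eval x f ≠ 0 then 1 else 0)
        (fun z : F × (Fin n → F) =>
          if MvPolynomial.eval (Fin.cons z.1 z.2) f ≠ 0 then 1 else 0)
        (fun x => by simp [Fin.consEquiv, Fin.cons_self_tail])
      rw [this, Fintype.sum_prod_type]
      rw [Finset.sum_comm]
      congr 1
      ext s
      rw [Finset.card_filter]
    -- combine
    have hsum : G.card * (q - k)
        ≤ (univ.filter fun x : Fin (n + 1) → F => MvPolynomial.eval x f ≠ 0).card := by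
      rw [hcount]
      calc G.card * (q - k) = ∑ _s ∈ G, (q - k) := by rw [Finset.sum_const, smul_eq_mul]
      _ ≤ ∑ s ∈ G, (univ.filter fun y : F =>
            MvPolynomial.eval (Fin.cons y s) f ≠ 0).card := Finset.sum_le_sum huni
      _ ≤ ∑ s : Fin n → F, (univ.filter fun y : F =>
            MvPolynomial.eval (Fin.cons y s) f ≠ 0).card :=
          Finset.sum_le_sum_of_subset (Finset.filter_subset _ _)
    -- arithmetic
    have harith : (q - d) * q ^ (n + 1) ≤ (q - (d - k)) * q ^ n * (q - k) := by
      have h1 : (q - d) * q ≤ (q - (d - k)) * (q - k) := by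
        have e1 : q - (d - k) = (q - d) + k := by omega
        rw [e1, Nat.add_mul]
        have e2 : (q - d) * q = (q - d) * (q - k) + (q - d) * k := by
          rw [← Nat.mul_add]
          congr 1
          omega
        rw [e2]
        apply Nat.add_le_add_left
        calc (q - d) * k = k * (q - d) := Nat.mul_comm _ _
        _ ≤ k * (q - k) := Nat.mul_le_mul_left k (by omega)
      calc (q - d) * q ^ (n + 1) = (q - d) * q * q ^ n := by ring
      _ ≤ (q - (d - k)) * (q - k) * q ^ n := Nat.mul_le_mul_right _ h1
      _ = (q - (d - k)) * q ^ n * (q - k) := by ring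
    calc (q - d) * q ^ (n + 1) ≤ (q - (d - k)) * q ^ n * (q - k) := harith
    _ ≤ G.card * q * (q - k) := Nat.mul_le_mul_right _ hG
    _ = G.card * (q - k) * q := by ring
    _ ≤ (univ.filter fun x : Fin (n + 1) → F =>
          MvPolynomial.eval x f ≠ 0).card * q := Nat.mul_le_mul_right _ hsum

open scoped Classical in
/-- A nonzero multivariate polynomial in `n ≥ 1` variables of total degree at most `d < q`
over a finite field `F` with `q` elements has at least `(q-d)·q^(n-1)` non-roots;
in particular it has a non-root. -/
theorem nonroots_lower_bound
    (F : Type*) [Field F] [Fintype F] (n d : ℕ) (hn : 1 ≤ n)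
    (hd : d < Fintype.card F)
    (f : MvPolynomial (Fin n) F) (hf : f ≠ 0) (hdeg : f.totalDegree ≤ d) :
    (Fintype.card F - d) * (Fintype.card F) ^ (n - 1)
        ≤ (Finset.univ.filter fun x : Fin n → F => MvPolynomial.eval x f ≠ 0).card
      ∧ ∃ x : Fin n → F, MvPolynomial.eval x f ≠ 0 := by
  have hq : 0 < Fintype.card F := Fintype.card_pos
  have hkey := key_bound n f hf d hdeg hd
  have hpow : (Fintype.card F) ^ n = (Fintype.card F) ^ (n - 1) * Fintype.card F := by
    conv_lhs => rw [show n = (n - 1) + 1 by omega]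
    rw [pow_succ]
  have hmain : (Fintype.card F - d) * (Fintype.card F) ^ (n - 1)
      ≤ (Finset.univ.filter fun x : Fin n → F => MvPolynomial.eval x f ≠ 0).card := by
    have := hkey
    rw [hpow, ← Nat.mul_assoc] at this
    exact Nat.le_of_mul_le_mul_right this hq
  refine ⟨hmain, ?_⟩
  have hpos : 0 < (Finset.univ.filter fun x : Fin n → F => MvPolynomial.eval x f ≠ 0).card := by
    have h1 : 0 < (Fintype.card F - d) * (Fintype.card F) ^ (n - 1) :=
      Nat.mul_pos (by omega) (Nat.pow_pos hq)
    omega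
  obtain ⟨x, hx⟩ := Finset.card_pos.mp hpos
  exact ⟨x, (Finset.mem_filter.mp hx).2⟩
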